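/- For a symmetric matrix $A \in \mathbb{R}^{n\times n}$ with trace $D$ and any unit vector $e \in \mathbb{R}^n$ and $N \ge n$: $\|A\|_{HS}^2 - \frac{1}{N}D^2 \ge \frac{N}{N-1}\left|Ae - \frac{D}{N}e\right|^2$. -/
import Mathlib


open Matrix

/-- linear-algebraic version of the self-improved
Bakry–Émery inequality along a unit vector. -/
theorem stmt8 (n : ℕ) (hn : 2 ≤ n) (N : ℝ) (hN : (n : ℝ) ≤ N)
    (A : Matrix (Fin n) (Fin n) ℝ) (hA : A.IsSymm)
    (e : Fin n → ℝ) (he : ∑ i, e i ^ 2 = 1) :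
    (∑ i, ∑ j, A i j ^ 2) - (1 / N) * A.trace ^ 2 ≥
      N / (N - 1) * ∑ i, (A.mulVec e i - A.trace / N * e i) ^ 2 := by
  have hsym : ∀ i j, A j i = A i j := fun i j => hA.apply i j
  -- abbreviations
  set v : Fin n → ℝ := fun i => ∑ j, A i j * e j with hv_def
  have hv : ∀ i, (∑ j, A i j * e j) = v i := fun i => rfl
  set t : ℝ := ∑ i, v i * e i with ht_def
  set V : ℝ := ∑ i, v i ^ 2 with hV_def
  set S : ℝ := ∑ i, ∑ j, A i j ^ 2 with hS_def
  set D : ℝ := A.trace with hD_def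
  have hD : D = ∑ i, A i i := rfl
  have hmv : ∀ i, A.mulVec e i = v i := fun i => rfl
  -- column sums
  have hcol : ∀ j, (∑ i, A i j * e i) = v j := by
    intro j
    rw [hv_def]
    exact Finset.sum_congr rfl fun i _ => by rw [hsym i j]
  -- ∑ i, e i * (∑ j, A i j * v j) = V
  have hq : (∑ i, e i * ∑ j, A i j * v j) = V := by
    have : (∑ i, e i * ∑ j, A i j * v j) = ∑ i, ∑ j, (A i j * e i) * v j := by
      refine Finset.sum_congr rfl fun i _ => ?_
      rw [Finset.mul_sum]; exact Finset.sum_congr rfl fun j _ => by ring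
    rw [this, Finset.sum_comm]
    rw [hV_def]
    refine Finset.sum_congr rfl fun j _ => ?_
    rw [← Finset.sum_mul, hcol j, sq]
  -- the matrix B = P A P
  set B : Fin n → Fin n → ℝ :=
    fun i j => A i j - e i * v j - v i * e j + t * (e i * e j) with hB_def
  -- ∑ B^2 = S - 2V + t^2
  have hrow : ∀ i, (∑ j, B i j ^ 2) =
      (∑ j, A i j ^ 2) + e i ^ 2 * V - v i ^ 2 - t ^ 2 * e i ^ 2
        - 2 * e i * (∑ j, A i j * v j) + 2 * t * (e i * v i) := by
    intro i
    have h1 : ∀ j, B i j ^ 2 =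
        A i j ^ 2 + e i ^ 2 * v j ^ 2
          + (v i ^ 2 + t ^ 2 * e i ^ 2 - 2 * t * (e i * v i)) * e j ^ 2
          + (-2 * e i) * (A i j * v j) + (2 * t * e i - 2 * v i) * (A i j * e j)
          + (2 * (e i * v i) - 2 * t * e i ^ 2) * (v j * e j) := by
      intro j; rw [hB_def]; ring
    rw [Finset.sum_congr rfl fun j _ => h1 j]
    simp only [Finset.sum_add_distrib, ← Finset.mul_sum]
    rw [he, hv i, ht_def.symm]
    rw [hV_def.symm]
    ring
  have hBsq : (∑ i, ∑ j, B i j ^ 2) = S - 2 * V + t ^ 2 := by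
    have het : (∑ i, e i * v i) = t := by
      rw [ht_def]; exact Finset.sum_congr rfl fun i _ => by ring
    have h4 : (∑ i, 2 * e i * ∑ j, A i j * v j) =
        2 * ∑ i, e i * ∑ j, A i j * v j := by
      rw [Finset.mul_sum]; exact Finset.sum_congr rfl fun i _ => by ring
    rw [Finset.sum_congr rfl fun i _ => hrow i]
    simp only [Finset.sum_add_distrib, Finset.sum_sub_distrib, ← Finset.sum_mul,
      ← Finset.mul_sum]
    rw [he, h4, hq, het, hV_def.symm, hS_def.symm]
    ring
  -- B e = 0 rowwise
  have hBe : ∀ i, (∑ j, B i j * e j) = 0 := by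
    intro i
    have h1 : ∀ j, B i j * e j =
        A i j * e j + (-(e i)) * (v j * e j) + (-(v i)) * e j ^ 2
          + (t * e i) * e j ^ 2 := by
      intro j; rw [hB_def]; ring
    rw [Finset.sum_congr rfl fun j _ => h1 j]
    simp only [Finset.sum_add_distrib, ← Finset.mul_sum]
    rw [he, hv i, ht_def.symm]
    ring
  -- trace of B
  have htr : (∑ i, B i i) = D - t := by
    have h1 : ∀ i, B i i = A i i + (-2) * (v i * e i) + t * e i ^ 2 := by
      intro i; rw [hB_def]; ring
    rw [Finset.sum_congr rfl fun i _ => h1 i]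
    simp only [Finset.sum_add_distrib, ← Finset.mul_sum]
    rw [he, ht_def.symm, hD.symm]
    ring
  -- the projection P
  set P : Fin n → Fin n → ℝ :=
    fun i j => (if i = j then (1:ℝ) else 0) - e i * e j with hP_def
  have hPB : (∑ i, ∑ j, P i j * B i j) = D - t := by
    have h1 : ∀ i, (∑ j, P i j * B i j) = B i i := by
      intro i
      have h2 : ∀ j, P i j * B i j =
          (if i = j then B i j else 0) - e i * (B i j * e j) := by
        intro j; rw [hP_def]; by_cases h : i = j <;> simp [h] <;> ring
      rw [Finset.sum_congr rfl fun j _ => h2 j, Finset.sum_sub_distrib,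
        ← Finset.mul_sum, hBe i, Finset.sum_ite_eq Finset.univ i (fun j => B i j)]
      simp
    rw [Finset.sum_congr rfl fun i _ => h1 i, htr]
  have hPP : (∑ i, ∑ j, P i j ^ 2) = (n : ℝ) - 1 := by
    have h1 : ∀ i, (∑ j, P i j ^ 2) = 1 - 2 * (e i * e i) + e i ^ 2 := by
      intro i
      have h2 : ∀ j, P i j ^ 2 =
          (if i = j then 1 - 2 * (e i * e j) else 0) + e i ^ 2 * e j ^ 2 := by
        intro j; rw [hP_def]; by_cases h : i = j <;> simp [h] <;> ring
      rw [Finset.sum_congr rfl fun j _ => h2 j, Finset.sum_add_distrib,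
        Finset.sum_ite_eq Finset.univ i (fun j => 1 - 2 * (e i * e j)),
        ← Finset.mul_sum, he]
      simp
    rw [Finset.sum_congr rfl fun i _ => h1 i]
    simp only [Finset.sum_add_distrib, Finset.sum_sub_distrib, ← Finset.mul_sum,
      Finset.sum_const, Finset.card_univ, Fintype.card_fin, nsmul_eq_mul, mul_one]
    have h3 : (∑ i, e i * e i) = 1 := by
      rw [← he]; exact Finset.sum_congr rfl fun i _ => (sq (e i)).symm
    rw [h3, he]
    ring
  -- Cauchy–Schwarz: (D - t)^2 ≤ (n-1) * ∑ B^2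
  have hCS : (D - t) ^ 2 ≤ ((n : ℝ) - 1) * (S - 2 * V + t ^ 2) := by
    have h := Finset.sum_mul_sq_le_sq_mul_sq Finset.univ
      (fun p : Fin n × Fin n => P p.1 p.2) (fun p : Fin n × Fin n => B p.1 p.2)
    simp only [Fintype.sum_prod_type] at h
    rwa [hPB, hPP, hBsq] at h
  -- Cauchy–Schwarz: t^2 ≤ V
  have hVt : t ^ 2 ≤ V := by
    have h := Finset.sum_mul_sq_le_sq_mul_sq Finset.univ v e
    rw [he, mul_one, ← ht_def, ← hV_def] at h
    exact h
  have hC0 : 0 ≤ S - 2 * V + t ^ 2 := by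
    rw [← hBsq]
    exact Finset.sum_nonneg fun i _ => Finset.sum_nonneg fun j _ => sq_nonneg _
  -- rewrite RHS
  have hRHS : (∑ i, (A.mulVec e i - D / N * e i) ^ 2) =
      V - 2 * (D / N) * t + (D / N) ^ 2 := by
    have h1 : ∀ i, (A.mulVec e i - D / N * e i) ^ 2 =
        v i ^ 2 + (-(2 * (D / N))) * (v i * e i) + (D / N) ^ 2 * e i ^ 2 := by
      intro i; rw [hmv i]; ring
    rw [Finset.sum_congr rfl fun i _ => h1 i]
    simp only [Finset.sum_add_distrib, ← Finset.mul_sum]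
    rw [he, ht_def.symm, hV_def.symm]
    ring
  rw [hRHS]
  -- numeric part
  have hn' : (2 : ℝ) ≤ (n : ℝ) := by exact_mod_cast hn
  have hN2 : (2 : ℝ) ≤ N := le_trans hn' hN
  have hN0 : (0 : ℝ) < N := by linarith
  have hN1 : (0 : ℝ) < N - 1 := by linarith
  have hCS2 : (D - t) ^ 2 ≤ (N - 1) * (S - 2 * V + t ^ 2) := by
    calc (D - t) ^ 2 ≤ ((n : ℝ) - 1) * (S - 2 * V + t ^ 2) := hCS
    _ ≤ (N - 1) * (S - 2 * V + t ^ 2) := by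
        apply mul_le_mul_of_nonneg_right _ hC0; linarith
  have hNne : N ≠ 0 := ne_of_gt hN0
  have hN1ne : N - 1 ≠ 0 := ne_of_gt hN1
  rw [ge_iff_le, ← sub_nonneg]
  have expand : S - 1 / N * D ^ 2 - N / (N - 1) * (V - 2 * (D / N) * t + (D / N) ^ 2) =
      (N * ((N - 1) * (S - 2 * V + t ^ 2) - (D - t) ^ 2)
        + (N * (N - 2)) * (V - t ^ 2)) / (N * (N - 1)) := by
    field_simp
    ring
  rw [expand]
  apply div_nonneg _ (le_of_lt (mul_pos hN0 hN1))
  exact add_nonneg (mul_nonneg hN0.le (sub_nonneg.2 hCS2))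
    (mul_nonneg (mul_nonneg hN0.le (by linarith : (0:ℝ) ≤ N - 2)) (sub_nonneg.2 hVt))
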